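/- For the three-step coin sequence (H, H, 1) (Hadamard, Hadamard, identity) in a discrete-time quantum walk starting at position 0, the final reduced coin state equals I/2 for every initial pure coin state cos(θ/2)|0⟩ + e^{iφ} sin(θ/2)|1⟩; equivalently, the von Neumann entanglement entropy of the walker–coin state after step 3 equals 1 for all θ, φ. -/

import Mathlib

open Matrix

abbrev WState := Fin 2 → ℤ → ℂ

def shiftOp (ψ : WState) : WState :=
  fun c x => if c = 0 then ψ 0 (x - 1) else ψ 1 (x + 1)

noncomputable def coinOp (C : Matrix (Fin 2) (Fin 2) ℂ) (ψ : WState) : WState :=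
  fun c x => ∑ c' : Fin 2, C c c' * ψ c' x

noncomputable def Had : Matrix (Fin 2) (Fin 2) ℂ :=
  (1 / Real.sqrt 2 : ℝ) • !![1, 1; 1, -1]

/-- Initial state `(cos(θ/2)|0⟩ + e^{iφ} sin(θ/2)|1⟩) ⊗ |0⟩`. -/
noncomputable def initState (θ φ : ℝ) : WState :=
  fun c x => if x = 0 then
    (if c = 0 then (Real.cos (θ / 2) : ℂ)
     else Complex.exp (Complex.I * φ) * (Real.sin (θ / 2) : ℂ)) else 0

lemma final_eq (θ φ : ℝ) :
    (shiftOp (coinOp 1 (shiftOp (coinOp Had (shiftOp (coinOp Had (initState θ φ)))))))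
    = fun c x =>
      if c = 0 then
        (if x = 3 then ((1/2 : ℝ) : ℂ) * ((Real.cos (θ/2) : ℂ) + Complex.exp (Complex.I * φ) * (Real.sin (θ/2) : ℂ))
         else if x = 1 then ((1/2 : ℝ) : ℂ) * ((Real.cos (θ/2) : ℂ) - Complex.exp (Complex.I * φ) * (Real.sin (θ/2) : ℂ))
         else 0)
      else
        (if x = -1 then ((1/2 : ℝ) : ℂ) * ((Real.cos (θ/2) : ℂ) + Complex.exp (Complex.I * φ) * (Real.sin (θ/2) : ℂ))
         else if x = -3 then -(((1/2 : ℝ) : ℂ) * ((Real.cos (θ/2) : ℂ) - Complex.exp (Complex.I * φ) * (Real.sin (θ/2) : ℂ)))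
         else 0) := by
  have hs2 : ((Real.sqrt 2 : ℝ) : ℂ) ^ 2 = 2 := by
    rw [sq, ← Complex.ofReal_mul, Real.mul_self_sqrt (by norm_num)]
    norm_num
  funext c x
  fin_cases c <;>
  · simp only [shiftOp, coinOp, initState, Had, Fin.sum_univ_two, Matrix.smul_apply,
      Matrix.one_apply, Matrix.cons_val', Matrix.cons_val_zero, Matrix.cons_val_one,
      Matrix.head_cons, Matrix.head_fin_const, Matrix.empty_val', Matrix.cons_val_fin_one,
      smul_eq_mul]
    norm_num
    split_ifs <;> first
      | (exfalso; omega)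
      | (push_cast; try field_simp; try ring_nf; try simp [hs2]; try ring_nf; try simp [hs2]; try ring)

theorem HH1_maximal_entanglement (θ φ : ℝ) :
    (fun c c' : Fin 2 =>
        ∑' x : ℤ,
          (shiftOp (coinOp 1 (shiftOp (coinOp Had (shiftOp (coinOp Had (initState θ φ))))))) c x
            * (starRingEnd ℂ)
              ((shiftOp (coinOp 1 (shiftOp (coinOp Had (shiftOp (coinOp Had (initState θ φ))))))) c' x))
      = fun c c' => ((1 / 2 : ℂ) • (1 : Matrix (Fin 2) (Fin 2) ℂ)) c c' := by
  have he : Complex.exp (Complex.I * φ) * Complex.exp (-(Complex.I * φ)) = 1 := by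
    rw [← Complex.exp_add]; simp
  have hcs : ((Real.cos (θ/2) : ℂ))^2 + ((Real.sin (θ/2) : ℂ))^2 = 1 := by
    push_cast [← Complex.ofReal_pow]
    exact Complex.cos_sq_add_sin_sq _
  rw [final_eq]
  funext c c'
  rw [tsum_eq_sum (s := ({-3,-1,1,3} : Finset ℤ))
    (by intro x hx; fin_cases c <;> fin_cases c' <;>
        · simp only [Finset.mem_insert, Finset.mem_singleton, not_or] at hx
          simp only []
          split_ifs <;> simp_all <;> omega)]
  fin_cases c <;> fin_cases c' <;>
  · simp only [Finset.sum_insert, Finset.mem_insert, Finset.mem_singleton,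
      Finset.sum_singleton]
    norm_num [Matrix.one_apply, _root_.map_mul, map_add, map_sub, Complex.conj_ofReal,
      ← Complex.exp_conj, map_neg, ← Complex.ofReal_cos, ← Complex.ofReal_sin]
    try rw [show ((starRingEnd ℂ) 2) = 2 from by norm_num [Complex.ext_iff]]
    try linear_combination (((Real.sin (θ/2) : ℂ))^2/2) * he + (1/2) * hcs
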